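/- Let (T_n) be positive linear operators on C[a,b] satisfying Σ_n ‖T_n(1)‖ p_n t^{n-1} < ∞ for t ∈ (0,1) for a power series method p. Suppose (i) lim_{t→1⁻} ‖(1/p(t)) Σ_n p_n t^{n-1} T_n(e_0) − e_0‖ = 0 and (ii) lim_{t→1⁻} ω₁(f; γ(t)) = 0 where γ(t) = (‖(1/p(t)) Σ_n p_n t^{n-1} T_n(φ_·)‖)^{1/2} with φ_x(z) = (z−x)². Then for every f ∈ C[a,b], lim_{t→1⁻} ‖(1/p(t)) Σ_n p_n t^{n-1} T_n(f) − f‖ = 0. -/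

import Mathlib

open Filter Set Topology

set_option maxHeartbeats 1600000

/-- The constant test function `e₀ = 1` on `[a, b]`. -/
def e₀ (a b : ℝ) : C(Set.Icc a b, ℝ) := ContinuousMap.const _ 1

/-- The test function `φₓ(z) = (z - x)²` on `[a, b]`. -/
def φ (a b : ℝ) (x : Set.Icc a b) : C(Set.Icc a b, ℝ) :=
  ⟨fun z => ((z : ℝ) - (x : ℝ)) ^ 2, by fun_prop⟩

/-- Rate-of-convergence Korovkin theorem via the power series summability
method: if the P-means of `Tₙ(e₀)` converge uniformly to `e₀` and
`ω₁(f; γ(t)) → 0` where `γ(t)² = sup_x (1/p(t)) Σₙ pₙ tⁿ⁻¹ Tₙ((·-x)²)(x)`,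
then the P-means of `Tₙ(f)` converge uniformly to `f` as `t → 1⁻`. -/
theorem korovkin_rate_power_series (a b : ℝ) (hab : a ≤ b)
    (T : ℕ → C(Set.Icc a b, ℝ) →ₗ[ℝ] C(Set.Icc a b, ℝ))
    (hT_pos : ∀ n, ∀ f : C(Set.Icc a b, ℝ), (∀ x, 0 ≤ f x) → ∀ x, 0 ≤ T n f x)
    (p : ℕ → ℝ) (hp_nonneg : ∀ n, 0 ≤ p n) (hp_pos : 0 < p 0)
    (hp_radius : ∀ t : ℝ, |t| < 1 → Summable fun n => p n * t ^ n)
    (hp_div : Tendsto (fun N => ∑ i ∈ Finset.range N, p i) atTop atTop)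
    (hT_bdd : ∀ t ∈ Set.Ioo (0 : ℝ) 1, Summable fun n => ‖T n (e₀ a b)‖ * p n * t ^ n)
    (f : C(Set.Icc a b, ℝ)) (ω : ℝ → ℝ)
    (hω : ∀ s : ℝ, ω s =
      sSup {y : ℝ | ∃ u v : Set.Icc a b, |(v : ℝ) - (u : ℝ)| ≤ s ∧ y = |f v - f u|})
    (γ : ℝ → ℝ)
    (hγ : ∀ t : ℝ, γ t = Real.sqrt
      (⨆ x : Set.Icc a b, (∑' n, p n * t ^ n * T n (φ a b x) x) / ∑' n, p n * t ^ n))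
    (h₁ : Tendsto (fun t : ℝ =>
        ⨆ x : Set.Icc a b,
          |(∑' n, p n * t ^ n * T n (e₀ a b) x) / (∑' n, p n * t ^ n) - e₀ a b x|)
      (𝓝[<] 1) (nhds 0))
    (h₂ : Tendsto (fun t : ℝ => ω (γ t)) (𝓝[<] 1) (nhds 0)) :
    Tendsto (fun t : ℝ =>
        ⨆ x : Set.Icc a b,
          |(∑' n, p n * t ^ n * T n f x) / (∑' n, p n * t ^ n) - f x|)
      (𝓝[<] 1) (nhds 0) := by
  haveI : Nonempty (Set.Icc a b) := (Set.nonempty_Icc.2 hab).to_subtype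
  set x₀ : Set.Icc a b := ⟨a, ⟨le_refl a, hab⟩⟩ with hx₀
  -- basic facts about the modulus of continuity ω
  have hset_bdd : ∀ s : ℝ, BddAbove
      {y : ℝ | ∃ u v : Set.Icc a b, |(v : ℝ) - (u : ℝ)| ≤ s ∧ y = |f v - f u|} := by
    intro s
    refine ⟨2 * ‖f‖, ?_⟩
    rintro y ⟨u, v, -, rfl⟩
    have h1 : |f v| ≤ ‖f‖ := by simpa [Real.norm_eq_abs] using f.norm_coe_le_norm v
    have h2 : |f u| ≤ ‖f‖ := by simpa [Real.norm_eq_abs] using f.norm_coe_le_norm u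
    have h3 : |f v - f u| ≤ |f v| + |f u| := abs_sub _ _
    linarith
  have hω_mem : ∀ (s : ℝ) (u v : Set.Icc a b), |(v : ℝ) - (u : ℝ)| ≤ s → |f v - f u| ≤ ω s := by
    intro s u v h
    rw [hω]
    exact le_csSup (hset_bdd s) ⟨u, v, h, rfl⟩
  have hω_nonneg : ∀ s : ℝ, 0 ≤ s → 0 ≤ ω s := by
    intro s hs
    exact le_trans (abs_nonneg _) (hω_mem s x₀ x₀ (by simpa using hs))
  -- subadditivity chain lemma
  have chain : ∀ δ : ℝ, 0 < δ → ∀ n : ℕ, ∀ u v : Set.Icc a b, (u : ℝ) ≤ (v : ℝ) →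
      (v : ℝ) - (u : ℝ) ≤ (n + 1) * δ → |f v - f u| ≤ (n + 1) * ω δ := by
    intro δ hδ n
    induction n with
    | zero =>
      intro u v huv h
      have := hω_mem δ u v (by rw [abs_of_nonneg (by linarith)]; simpa using h)
      simpa using this
    | succ n ih =>
      intro u v huv h
      have hwmem : min (v : ℝ) ((u : ℝ) + (n + 1) * δ) ∈ Set.Icc a b := by
        constructor
        · exact le_min v.2.1 (by nlinarith [u.2.1])
        · exact le_trans (min_le_left _ _) v.2.2
      set w : Set.Icc a b := ⟨_, hwmem⟩ with hw
      have hw1 : (u : ℝ) ≤ (w : ℝ) := le_min huv (by nlinarith)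
      have hw2 : (w : ℝ) ≤ (v : ℝ) := min_le_left _ _
      have hwu : (w : ℝ) - (u : ℝ) ≤ (n + 1) * δ := by
        have := min_le_right (v : ℝ) ((u : ℝ) + (n + 1) * δ)
        have hww : (w : ℝ) = min (v : ℝ) ((u : ℝ) + (n + 1) * δ) := rfl
        rw [hww]; linarith
      have hvw : (v : ℝ) - (w : ℝ) ≤ δ := by
        have hww : (w : ℝ) = min (v : ℝ) ((u : ℝ) + (n + 1) * δ) := rfl
        push_cast at h
        rcases le_total (v : ℝ) ((u : ℝ) + (n + 1) * δ) with h' | h'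
        · rw [hww, min_eq_left h']; linarith
        · rw [hww, min_eq_right h']; linarith
      have b1 : |f w - f u| ≤ (n + 1) * ω δ := ih u w hw1 hwu
      have b2 : |f v - f w| ≤ ω δ :=
        hω_mem δ w v (by rw [abs_of_nonneg (by linarith)]; exact hvw)
      have tri : |f v - f u| ≤ |f v - f w| + |f w - f u| := by
        have := abs_add_le (f v - f w) (f w - f u)
        simpa using this
      push_cast
      push_cast at b1
      linarith
  -- key modulus inequality
  have key_mod : ∀ δ : ℝ, 0 < δ → ∀ u v : Set.Icc a b,
      |f v - f u| ≤ ω δ * (1 + ((v : ℝ) - (u : ℝ)) ^ 2 / δ ^ 2) := by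
    have main : ∀ δ : ℝ, 0 < δ → ∀ u v : Set.Icc a b, (u : ℝ) ≤ (v : ℝ) →
        |f v - f u| ≤ ω δ * (1 + ((v : ℝ) - (u : ℝ)) ^ 2 / δ ^ 2) := by
      intro δ hδ u v huv
      have hωδ : 0 ≤ ω δ := hω_nonneg δ hδ.le
      have hs0 : 0 ≤ (v : ℝ) - (u : ℝ) := by linarith
      set s : ℝ := (v : ℝ) - (u : ℝ) with hs
      have hsq : (0:ℝ) ≤ s ^ 2 / δ ^ 2 := by positivity
      rcases le_or_gt s δ with hcase | hcase
      · have h0 := chain δ hδ 0 u v huv (by push_cast; linarith)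
        push_cast at h0
        nlinarith
      · set n := ⌊s / δ⌋₊ with hn
        have h1 : s / δ < n + 1 := Nat.lt_floor_add_one _
        have h2 : (n : ℝ) ≤ s / δ := Nat.floor_le (by positivity)
        have h3 : s ≤ (n + 1) * δ := by
          have := (div_lt_iff₀ hδ).mp h1
          linarith
        have h4 := chain δ hδ n u v huv (by push_cast; linarith)
        have h5 : 1 ≤ s / δ := (one_le_div hδ).mpr hcase.le
        have h6 : (n : ℝ) + 1 ≤ 1 + s ^ 2 / δ ^ 2 := by
          have hq : s / δ ≤ (s / δ) ^ 2 := by nlinarith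
          have heq : (s / δ) ^ 2 = s ^ 2 / δ ^ 2 := by rw [div_pow]
          nlinarith
        push_cast at h4
        nlinarith
    intro δ hδ u v
    rcases le_total (u : ℝ) (v : ℝ) with h | h
    · exact main δ hδ u v h
    · have h' := main δ hδ v u h
      rw [abs_sub_comm] at h'
      calc |f v - f u| ≤ ω δ * (1 + ((u : ℝ) - (v : ℝ)) ^ 2 / δ ^ 2) := h'
        _ = ω δ * (1 + ((v : ℝ) - (u : ℝ)) ^ 2 / δ ^ 2) := by ring_nf
  -- uniform continuity: ω can be made small
  have hucont : ∀ ε : ℝ, 0 < ε → ∃ δ : ℝ, 0 < δ ∧ ω δ ≤ ε := by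
    intro ε hε
    have huc : UniformContinuous (f : Set.Icc a b → ℝ) :=
      CompactSpace.uniformContinuous_of_continuous f.continuous
    rw [Metric.uniformContinuous_iff] at huc
    obtain ⟨δ, hδ, hδ'⟩ := huc ε hε
    refine ⟨δ / 2, by positivity, ?_⟩
    rw [hω]
    refine csSup_le ⟨0, x₀, x₀, ?_, by simp⟩ ?_
    · simpa using (by positivity : (0:ℝ) ≤ δ / 2)
    rintro y ⟨u, v, huv, rfl⟩
    have hd : dist v u < δ := by
      rw [Subtype.dist_eq, Real.dist_eq]
      linarith
    have := hδ' hd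
    rw [Real.dist_eq] at this
    exact this.le
  -- the main per-t estimate
  have keyt : ∀ t : ℝ, t ∈ Set.Ioo (0:ℝ) 1 →
      0 ≤ (⨆ x : Set.Icc a b,
          |(∑' n, p n * t ^ n * T n f x) / (∑' n, p n * t ^ n) - f x|) ∧
      (⨆ x : Set.Icc a b,
          |(∑' n, p n * t ^ n * T n f x) / (∑' n, p n * t ^ n) - f x|) ≤
        ‖f‖ * (⨆ x : Set.Icc a b,
            |(∑' n, p n * t ^ n * T n (e₀ a b) x) / (∑' n, p n * t ^ n) - e₀ a b x|)
        + ω (γ t) * ((⨆ x : Set.Icc a b,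
            |(∑' n, p n * t ^ n * T n (e₀ a b) x) / (∑' n, p n * t ^ n) - e₀ a b x|) + 2) := by
    intro t ht
    obtain ⟨ht0, ht1⟩ := ht
    have habs_t : |t| < 1 := by rw [abs_of_pos ht0]; exact ht1
    have hsum : Summable fun n => p n * t ^ n := hp_radius t habs_t
    have hterm : ∀ n : ℕ, 0 ≤ p n * t ^ n := fun n =>
      mul_nonneg (hp_nonneg n) (pow_nonneg ht0.le n)
    have hSsum : Summable fun n => ‖T n (e₀ a b)‖ * p n * t ^ n := hT_bdd t ⟨ht0, ht1⟩
    set P : ℝ := ∑' n, p n * t ^ n with hPdef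
    have hP : 0 < P := by
      have h0 : p 0 * t ^ 0 ≤ P := Summable.le_tsum hsum 0 (fun i _ => hterm i)
      have : p 0 ≤ P := by simpa using h0
      linarith
    set S : ℝ := ∑' n, ‖T n (e₀ a b)‖ * p n * t ^ n with hSdef
    have hS0 : 0 ≤ S := tsum_nonneg fun n =>
      mul_nonneg (mul_nonneg (norm_nonneg _) (hp_nonneg n)) (pow_nonneg ht0.le n)
    -- pointwise operator bound via positivity
    have hTg : ∀ (g : C(Set.Icc a b, ℝ)) (n : ℕ) (x : Set.Icc a b),
        |T n g x| ≤ ‖g‖ * T n (e₀ a b) x := by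
      intro g n x
      have hb : ∀ z : Set.Icc a b, |g z| ≤ ‖g‖ := fun z => by
        simpa [Real.norm_eq_abs] using g.norm_coe_le_norm z
      have h1 : ∀ z : Set.Icc a b, 0 ≤ (‖g‖ • e₀ a b - g) z := by
        intro z
        have := (abs_le.mp (hb z)).2
        simp only [ContinuousMap.sub_apply, ContinuousMap.smul_apply, smul_eq_mul, e₀,
          ContinuousMap.const_apply, mul_one, sub_nonneg]
        linarith
      have h2 : ∀ z : Set.Icc a b, 0 ≤ (‖g‖ • e₀ a b + g) z := by
        intro z
        have := (abs_le.mp (hb z)).1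
        simp only [ContinuousMap.add_apply, ContinuousMap.smul_apply, smul_eq_mul, e₀,
          ContinuousMap.const_apply, mul_one]
        linarith
      have p1 := hT_pos n _ h1 x
      have p2 := hT_pos n _ h2 x
      rw [map_sub, map_smul] at p1
      rw [map_add, map_smul] at p2
      simp only [ContinuousMap.sub_apply, ContinuousMap.add_apply, ContinuousMap.smul_apply,
        smul_eq_mul] at p1 p2
      rw [abs_le]
      constructor <;> linarith
    have hTnorm : ∀ (n : ℕ) (x : Set.Icc a b), T n (e₀ a b) x ≤ ‖T n (e₀ a b)‖ := by
      intro n x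
      have := (T n (e₀ a b)).norm_coe_le_norm x
      rw [Real.norm_eq_abs] at this
      exact (le_abs_self _).trans this
    have hbnd : ∀ (g : C(Set.Icc a b, ℝ)) (x : Set.Icc a b) (n : ℕ),
        ‖p n * t ^ n * T n g x‖ ≤ ‖g‖ * (‖T n (e₀ a b)‖ * p n * t ^ n) := by
      intro g x n
      rw [Real.norm_eq_abs, abs_mul, abs_of_nonneg (hterm n)]
      have h1 := hTg g n x
      have h2 := hTnorm n x
      have h3 : |T n g x| ≤ ‖g‖ * ‖T n (e₀ a b)‖ :=
        h1.trans (mul_le_mul_of_nonneg_left h2 (norm_nonneg g))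
      calc p n * t ^ n * |T n g x| ≤ p n * t ^ n * (‖g‖ * ‖T n (e₀ a b)‖) :=
            mul_le_mul_of_nonneg_left h3 (hterm n)
        _ = ‖g‖ * (‖T n (e₀ a b)‖ * p n * t ^ n) := by ring
    have hsum_g : ∀ (g : C(Set.Icc a b, ℝ)) (x : Set.Icc a b),
        Summable fun n => p n * t ^ n * T n g x := by
      intro g x
      exact Summable.of_norm_bounded (hSsum.mul_left ‖g‖) (hbnd g x)
    have habs_tsum : ∀ (g : C(Set.Icc a b, ℝ)) (x : Set.Icc a b),
        |∑' n, p n * t ^ n * T n g x| ≤ ‖g‖ * S := by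
      intro g x
      have hsabs : Summable fun n => ‖p n * t ^ n * T n g x‖ :=
        Summable.of_nonneg_of_le (fun n => norm_nonneg _) (hbnd g x) (hSsum.mul_left ‖g‖)
      have h1 : ‖∑' n, p n * t ^ n * T n g x‖ ≤ ∑' n, ‖p n * t ^ n * T n g x‖ :=
        norm_tsum_le_tsum_norm hsabs
      have h2 : (∑' n, ‖p n * t ^ n * T n g x‖) ≤ ∑' n, ‖g‖ * (‖T n (e₀ a b)‖ * p n * t ^ n) :=
        Summable.tsum_le_tsum (hbnd g x) hsabs (hSsum.mul_left ‖g‖)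
      rw [Real.norm_eq_abs] at h1
      rw [tsum_mul_left] at h2
      exact h1.trans (h2.trans (le_of_eq rfl))
    -- nonnegativity of B and C sums
    have hφ_nonneg : ∀ x z : Set.Icc a b, 0 ≤ (φ a b x) z := by
      intro x z
      simp only [φ, ContinuousMap.coe_mk]
      positivity
    have he₀_nonneg : ∀ z : Set.Icc a b, 0 ≤ (e₀ a b) z := by
      intro z
      simp [e₀]
    have hB_nonneg : ∀ x : Set.Icc a b, 0 ≤ ∑' n, p n * t ^ n * T n (e₀ a b) x := fun x =>
      tsum_nonneg fun n => mul_nonneg (hterm n) (hT_pos n _ he₀_nonneg x)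
    have hC_nonneg : ∀ x : Set.Icc a b, 0 ≤ ∑' n, p n * t ^ n * T n (φ a b x) x := fun x =>
      tsum_nonneg fun n => mul_nonneg (hterm n) (hT_pos n _ (hφ_nonneg x) x)
    -- boundedness of the three suprema families
    have hφ_norm : ∀ x : Set.Icc a b, ‖φ a b x‖ ≤ (b - a) ^ 2 := by
      intro x
      rw [ContinuousMap.norm_le _ (by positivity)]
      intro z
      rw [Real.norm_eq_abs]
      simp only [φ, ContinuousMap.coe_mk]
      rw [abs_of_nonneg (sq_nonneg _)]
      nlinarith [z.2.1, z.2.2, x.2.1, x.2.2]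
    have hBddA : BddAbove (Set.range fun x : Set.Icc a b =>
        |(∑' n, p n * t ^ n * T n f x) / P - f x|) := by
      refine ⟨‖f‖ * S / P + ‖f‖, ?_⟩
      rintro y ⟨x, rfl⟩
      have h1 := habs_tsum f x
      have h2 : |f x| ≤ ‖f‖ := by simpa [Real.norm_eq_abs] using f.norm_coe_le_norm x
      have h3 : |(∑' n, p n * t ^ n * T n f x) / P - f x| ≤
          |(∑' n, p n * t ^ n * T n f x) / P| + |f x| := abs_sub _ _
      have h4 : |(∑' n, p n * t ^ n * T n f x) / P| = |∑' n, p n * t ^ n * T n f x| / P := by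
        rw [abs_div, abs_of_pos hP]
      have h5 : |∑' n, p n * t ^ n * T n f x| / P ≤ ‖f‖ * S / P := by
        apply div_le_div_of_nonneg_right h1 hP.le
      linarith [h4 ▸ h3]
    have hBddB : BddAbove (Set.range fun x : Set.Icc a b =>
        |(∑' n, p n * t ^ n * T n (e₀ a b) x) / P - e₀ a b x|) := by
      refine ⟨‖e₀ a b‖ * S / P + 1, ?_⟩
      rintro y ⟨x, rfl⟩
      have h1 := habs_tsum (e₀ a b) x
      have h3 : |(∑' n, p n * t ^ n * T n (e₀ a b) x) / P - e₀ a b x| ≤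
          |(∑' n, p n * t ^ n * T n (e₀ a b) x) / P| + |e₀ a b x| := abs_sub _ _
      have h4 : |(∑' n, p n * t ^ n * T n (e₀ a b) x) / P|
          = |∑' n, p n * t ^ n * T n (e₀ a b) x| / P := by
        rw [abs_div, abs_of_pos hP]
      have h5 : |∑' n, p n * t ^ n * T n (e₀ a b) x| / P ≤ ‖e₀ a b‖ * S / P :=
        div_le_div_of_nonneg_right h1 hP.le
      have h6 : |e₀ a b x| = 1 := by simp [e₀]
      linarith [h4 ▸ h3]
    have hBddC : BddAbove (Set.range fun x : Set.Icc a b =>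
        (∑' n, p n * t ^ n * T n (φ a b x) x) / P) := by
      refine ⟨(b - a) ^ 2 * S / P, ?_⟩
      rintro y ⟨x, rfl⟩
      have h1 := habs_tsum (φ a b x) x
      have h2 : (∑' n, p n * t ^ n * T n (φ a b x) x) ≤ ‖φ a b x‖ * S :=
        (le_abs_self _).trans h1
      have h3 : ‖φ a b x‖ * S ≤ (b - a) ^ 2 * S :=
        mul_le_mul_of_nonneg_right (hφ_norm x) hS0
      exact div_le_div_of_nonneg_right (h2.trans h3) hP.le
    -- γ facts
    have hγt := hγ t
    rw [← hPdef] at hγt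
    have hγsq : γ t ^ 2 = ⨆ x : Set.Icc a b, (∑' n, p n * t ^ n * T n (φ a b x) x) / P := by
      rw [hγt]
      exact Real.sq_sqrt (le_trans (div_nonneg (hC_nonneg x₀) hP.le) (le_ciSup hBddC x₀))
    have hγ0 : 0 ≤ γ t := by rw [hγt]; exact Real.sqrt_nonneg _
    have hCle : ∀ x : Set.Icc a b,
        (∑' n, p n * t ^ n * T n (φ a b x) x) / P ≤ γ t ^ 2 := by
      intro x
      rw [hγsq]
      exact le_ciSup hBddC x
    -- E facts
    set Et : ℝ := ⨆ x : Set.Icc a b,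
        |(∑' n, p n * t ^ n * T n (e₀ a b) x) / P - e₀ a b x| with hEt
    have hEx : ∀ x : Set.Icc a b,
        |(∑' n, p n * t ^ n * T n (e₀ a b) x) / P - 1| ≤ Et := by
      intro x
      have := le_ciSup hBddB x
      simpa [e₀, hEt] using this
    have hEt0 : 0 ≤ Et := le_trans (abs_nonneg _) (hEx x₀)
    -- the key estimate before dividing by P
    have key_est : ∀ (x : Set.Icc a b) (δ : ℝ), 0 < δ →
        |(∑' n, p n * t ^ n * T n f x) - f x * ∑' n, p n * t ^ n * T n (e₀ a b) x|
          ≤ ω δ * ((∑' n, p n * t ^ n * T n (e₀ a b) x)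
            + δ⁻¹ ^ 2 * ∑' n, p n * t ^ n * T n (φ a b x) x) := by
      intro x δ hδ
      have hωδ : 0 ≤ ω δ := hω_nonneg δ hδ.le
      have hptw : ∀ n, |T n f x - f x * T n (e₀ a b) x|
          ≤ ω δ * (T n (e₀ a b) x + δ⁻¹ ^ 2 * T n (φ a b x) x) := by
        intro n
        have hzz : ∀ z : Set.Icc a b, |f z - f x| ≤ ω δ * (1 + ((z : ℝ) - (x : ℝ)) ^ 2 / δ ^ 2) :=
          fun z => key_mod δ hδ x z
        have hdinv : ∀ z : Set.Icc a b,
            δ⁻¹ ^ 2 * ((z : ℝ) - (x : ℝ)) ^ 2 = ((z : ℝ) - (x : ℝ)) ^ 2 / δ ^ 2 := by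
          intro z
          field_simp
        have hg₁ : ∀ z : Set.Icc a b,
            0 ≤ ((ω δ) • (e₀ a b + (δ⁻¹ ^ 2) • φ a b x) - (f - f x • e₀ a b)) z := by
          intro z
          have h := (abs_le.mp (hzz z)).2
          simp only [ContinuousMap.sub_apply, ContinuousMap.add_apply, ContinuousMap.smul_apply,
            smul_eq_mul, e₀, ContinuousMap.const_apply, φ, ContinuousMap.coe_mk, mul_one]
          rw [show ω δ * (1 + δ⁻¹ ^ 2 * ((z : ℝ) - (x : ℝ)) ^ 2)
              = ω δ * (1 + ((z : ℝ) - (x : ℝ)) ^ 2 / δ ^ 2) by rw [hdinv z]]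
          linarith
        have hg₂ : ∀ z : Set.Icc a b,
            0 ≤ ((ω δ) • (e₀ a b + (δ⁻¹ ^ 2) • φ a b x) + (f - f x • e₀ a b)) z := by
          intro z
          have h := (abs_le.mp (hzz z)).1
          simp only [ContinuousMap.sub_apply, ContinuousMap.add_apply, ContinuousMap.smul_apply,
            smul_eq_mul, e₀, ContinuousMap.const_apply, φ, ContinuousMap.coe_mk, mul_one]
          rw [show ω δ * (1 + δ⁻¹ ^ 2 * ((z : ℝ) - (x : ℝ)) ^ 2)
              = ω δ * (1 + ((z : ℝ) - (x : ℝ)) ^ 2 / δ ^ 2) by rw [hdinv z]]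
          linarith
        have p1 := hT_pos n _ hg₁ x
        have p2 := hT_pos n _ hg₂ x
        rw [map_sub, map_smul, map_add, map_smul, map_sub, map_smul] at p1
        rw [map_add, map_smul, map_add, map_smul, map_sub, map_smul] at p2
        simp only [ContinuousMap.sub_apply, ContinuousMap.add_apply, ContinuousMap.smul_apply,
          smul_eq_mul] at p1 p2
        rw [abs_le]
        constructor <;> linarith
      have hsA := hsum_g f x
      have hsB := hsum_g (e₀ a b) x
      have hsC := hsum_g (φ a b x) x
      have heq : (∑' n, p n * t ^ n * T n f x) - f x * ∑' n, p n * t ^ n * T n (e₀ a b) x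
          = ∑' n, p n * t ^ n * (T n f x - f x * T n (e₀ a b) x) := by
        rw [← tsum_mul_left, ← Summable.tsum_sub hsA (hsB.mul_left (f x))]
        exact tsum_congr fun n => by ring
      rw [heq]
      have hrhs_sum : Summable fun n =>
          ω δ * (p n * t ^ n * T n (e₀ a b) x + δ⁻¹ ^ 2 * (p n * t ^ n * T n (φ a b x) x)) :=
        ((hsB.add (hsC.mul_left (δ⁻¹ ^ 2))).mul_left (ω δ))
      have hptw' : ∀ n, ‖p n * t ^ n * (T n f x - f x * T n (e₀ a b) x)‖ ≤
          ω δ * (p n * t ^ n * T n (e₀ a b) x + δ⁻¹ ^ 2 * (p n * t ^ n * T n (φ a b x) x)) := by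
        intro n
        rw [Real.norm_eq_abs, abs_mul, abs_of_nonneg (hterm n)]
        calc p n * t ^ n * |T n f x - f x * T n (e₀ a b) x|
            ≤ p n * t ^ n * (ω δ * (T n (e₀ a b) x + δ⁻¹ ^ 2 * T n (φ a b x) x)) :=
              mul_le_mul_of_nonneg_left (hptw n) (hterm n)
          _ = ω δ * (p n * t ^ n * T n (e₀ a b) x + δ⁻¹ ^ 2 * (p n * t ^ n * T n (φ a b x) x)) := by
              ring
      have habs_sum : Summable fun n => ‖p n * t ^ n * (T n f x - f x * T n (e₀ a b) x)‖ :=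
        Summable.of_nonneg_of_le (fun n => norm_nonneg _) hptw' hrhs_sum
      have h1 : |∑' n, p n * t ^ n * (T n f x - f x * T n (e₀ a b) x)|
          ≤ ∑' n, ‖p n * t ^ n * (T n f x - f x * T n (e₀ a b) x)‖ := by
        rw [← Real.norm_eq_abs]
        exact norm_tsum_le_tsum_norm habs_sum
      have h2 : (∑' n, ‖p n * t ^ n * (T n f x - f x * T n (e₀ a b) x)‖)
          ≤ ∑' n, ω δ * (p n * t ^ n * T n (e₀ a b) x
              + δ⁻¹ ^ 2 * (p n * t ^ n * T n (φ a b x) x)) :=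
        Summable.tsum_le_tsum hptw' habs_sum hrhs_sum
      have h3 : (∑' n, ω δ * (p n * t ^ n * T n (e₀ a b) x
              + δ⁻¹ ^ 2 * (p n * t ^ n * T n (φ a b x) x)))
          = ω δ * ((∑' n, p n * t ^ n * T n (e₀ a b) x)
            + δ⁻¹ ^ 2 * ∑' n, p n * t ^ n * T n (φ a b x) x) := by
        rw [tsum_mul_left, Summable.tsum_add hsB (hsC.mul_left (δ⁻¹ ^ 2)), tsum_mul_left]
      linarith [h1.trans h2, le_of_eq h3]
    -- the divided estimate
    have hdiv : ∀ (x : Set.Icc a b) (δ : ℝ), 0 < δ →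
        |(∑' n, p n * t ^ n * T n f x) / P
            - f x * ((∑' n, p n * t ^ n * T n (e₀ a b) x) / P)| ≤
          ω δ * ((∑' n, p n * t ^ n * T n (e₀ a b) x) / P
            + δ⁻¹ ^ 2 * ((∑' n, p n * t ^ n * T n (φ a b x) x) / P)) := by
      intro x δ hδ
      have h := key_est x δ hδ
      have e1 : (∑' n, p n * t ^ n * T n f x) / P
          - f x * ((∑' n, p n * t ^ n * T n (e₀ a b) x) / P)
          = ((∑' n, p n * t ^ n * T n f x)
            - f x * ∑' n, p n * t ^ n * T n (e₀ a b) x) / P := by ring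
      have e2 : ω δ * ((∑' n, p n * t ^ n * T n (e₀ a b) x) / P
          + δ⁻¹ ^ 2 * ((∑' n, p n * t ^ n * T n (φ a b x) x) / P))
          = (ω δ * ((∑' n, p n * t ^ n * T n (e₀ a b) x)
            + δ⁻¹ ^ 2 * ∑' n, p n * t ^ n * T n (φ a b x) x)) / P := by ring
      rw [e1, e2, abs_div, abs_of_pos hP]
      exact div_le_div_of_nonneg_right h hP.le
    -- the main pointwise bound
    have main : ∀ x : Set.Icc a b,
        |(∑' n, p n * t ^ n * T n f x) / P - f x| ≤
          ‖f‖ * Et + ω (γ t) * (Et + 2) := by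
      intro x
      have hfx : |f x| ≤ ‖f‖ := by simpa [Real.norm_eq_abs] using f.norm_coe_le_norm x
      have hBx1 := hEx x
      have hBP : 0 ≤ (∑' n, p n * t ^ n * T n (e₀ a b) x) / P :=
        div_nonneg (hB_nonneg x) hP.le
      have hCP : 0 ≤ (∑' n, p n * t ^ n * T n (φ a b x) x) / P :=
        div_nonneg (hC_nonneg x) hP.le
      have hBle : (∑' n, p n * t ^ n * T n (e₀ a b) x) / P ≤ Et + 1 := by
        have := (abs_le.mp hBx1).2
        linarith
      have tri : |(∑' n, p n * t ^ n * T n f x) / P - f x| ≤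
          |(∑' n, p n * t ^ n * T n f x) / P
            - f x * ((∑' n, p n * t ^ n * T n (e₀ a b) x) / P)|
          + |f x| * |(∑' n, p n * t ^ n * T n (e₀ a b) x) / P - 1| := by
        have h1 : (∑' n, p n * t ^ n * T n f x) / P - f x
            = ((∑' n, p n * t ^ n * T n f x) / P
              - f x * ((∑' n, p n * t ^ n * T n (e₀ a b) x) / P))
            + f x * ((∑' n, p n * t ^ n * T n (e₀ a b) x) / P - 1) := by ring
        rw [h1]
        refine (abs_add_le _ _).trans ?_
        rw [abs_mul]
      have hsecond : |f x| * |(∑' n, p n * t ^ n * T n (e₀ a b) x) / P - 1| ≤ ‖f‖ * Et :=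
        mul_le_mul hfx hBx1 (abs_nonneg _) (norm_nonneg f)
      rcases eq_or_lt_of_le hγ0 with hγ0' | hγpos
      · -- γ t = 0 : the second moment vanishes
        have hC0 : (∑' n, p n * t ^ n * T n (φ a b x) x) / P = 0 := by
          have h := hCle x
          rw [← hγ0'] at h
          simpa using le_antisymm (by simpa using h) hCP
        have hsmall : |(∑' n, p n * t ^ n * T n f x) / P
            - f x * ((∑' n, p n * t ^ n * T n (e₀ a b) x) / P)| ≤ 0 := by
          apply le_of_forall_pos_le_add
          intro ε hε
          have hEt1 : (0:ℝ) < Et + 1 := by linarith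
          obtain ⟨δ, hδpos, hωle⟩ := hucont (ε / (Et + 1)) (by positivity)
          have h := hdiv x δ hδpos
          rw [hC0] at h
          have hb : ω δ * ((∑' n, p n * t ^ n * T n (e₀ a b) x) / P + δ⁻¹ ^ 2 * 0)
              = ω δ * ((∑' n, p n * t ^ n * T n (e₀ a b) x) / P) := by ring
        
          rw [hb] at h
          have hωδ : 0 ≤ ω δ := hω_nonneg δ hδpos.le
          have h2 : ω δ * ((∑' n, p n * t ^ n * T n (e₀ a b) x) / P)
              ≤ (ε / (Et + 1)) * (Et + 1) :=
            mul_le_mul hωle hBle hBP (by positivity)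
          rw [div_mul_cancel₀ _ (ne_of_gt hEt1)] at h2
          linarith
        have hωγ : 0 ≤ ω (γ t) := hω_nonneg (γ t) hγ0
        have : 0 ≤ ω (γ t) * (Et + 2) := mul_nonneg hωγ (by linarith)
        linarith
      · -- γ t > 0
        have h := hdiv x (γ t) hγpos
        have hc : (γ t)⁻¹ ^ 2 * ((∑' n, p n * t ^ n * T n (φ a b x) x) / P) ≤ 1 := by
          have hCx := hCle x
          rw [inv_pow, inv_mul_le_iff₀ (by positivity)]
          simpa using hCx
        have hωγ : 0 ≤ ω (γ t) := hω_nonneg (γ t) hγ0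
        have h2 : |(∑' n, p n * t ^ n * T n f x) / P
            - f x * ((∑' n, p n * t ^ n * T n (e₀ a b) x) / P)| ≤ ω (γ t) * (Et + 2) := by
          refine h.trans ?_
          apply mul_le_mul_of_nonneg_left _ hωγ
          linarith
        linarith
    constructor
    · exact le_trans (abs_nonneg _) (le_ciSup hBddA x₀)
    · exact ciSup_le main
  -- conclude by squeezing
  have hIoo : Set.Ioo (0:ℝ) 1 ∈ 𝓝[<] (1:ℝ) :=
    Ioo_mem_nhdsLT_of_mem (by constructor <;> norm_num)
  have hUten : Tendsto (fun t : ℝ =>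
      ‖f‖ * (⨆ x : Set.Icc a b,
          |(∑' n, p n * t ^ n * T n (e₀ a b) x) / (∑' n, p n * t ^ n) - e₀ a b x|)
      + ω (γ t) * ((⨆ x : Set.Icc a b,
          |(∑' n, p n * t ^ n * T n (e₀ a b) x) / (∑' n, p n * t ^ n) - e₀ a b x|) + 2))
      (𝓝[<] 1) (𝓝 0) := by
    have h := (h₁.const_mul ‖f‖).add (h₂.mul (h₁.add_const 2))
    simpa using h
  refine tendsto_of_tendsto_of_tendsto_of_le_of_le' tendsto_const_nhds hUten ?_ ?_
  · filter_upwards [hIoo] with t ht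
    exact (keyt t ht).1
  · filter_upwards [hIoo] with t ht
    exact (keyt t ht).2
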